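/- Let θ be an infinite cardinal and let λ be a cardinal with cf(2^θ) ≤ λ < 2^θ. Then there is no family F of at most 2^θ graphs, each of cardinality λ, such that for every set A of subsets of θ with |A| = λ, the incidence graph Γ_A embeds as an induced subgraph into some member of F. -/

import Mathlib

universe u

open Cardinal

/-- The incidence graph `Γ_A` of a family `A` of subsets of `Θ`: the bipartite graph
with left side `Θ`, right side `A`, and an edge between `z : Θ` and `x ∈ A` iff `z ∈ x`. -/
def incidenceGraph (Θ : Type u) (A : Set (Set Θ)) : SimpleGraph (Θ ⊕ ↥A) :=
  SimpleGraph.fromRel fun v w =>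
    match v, w with
    | Sum.inl z, Sum.inr x => z ∈ (x : Set Θ)
    | _, _ => False

set_option maxHeartbeats 1000000 in
/-- If `θ` is infinite and `cf(2^θ) ≤ λ < 2^θ`, then there is no family of at most `2^θ`
graphs, each of cardinality `λ`, such that every incidence graph `Γ_A` with `|A| = λ`
embeds as an induced subgraph into some member of the family. -/
theorem stmt4 (θ lam : Cardinal.{u}) (hθ : ℵ₀ ≤ θ)
    (hcf : ((2 : Cardinal.{u}) ^ θ).ord.cof ≤ lam) (hlt : lam < 2 ^ θ) :
    ¬ ∃ (ι : Type u) (V : ι → Type u) (G : ∀ i, SimpleGraph (V i)),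
        #ι ≤ 2 ^ θ ∧ (∀ i, #(V i) = lam) ∧
        ∀ A : Set (Set θ.out), #A = lam →
          ∃ i, Nonempty (incidenceGraph θ.out A ↪g G i) := by
  rintro ⟨ι, V, G, hι, hV, hcover⟩
  set Θ := θ.out with hΘdef
  have hΘ : #Θ = θ := mk_out θ
  have h2inf : ℵ₀ ≤ (2 : Cardinal.{u}) ^ θ := hθ.trans (cantor θ).le
  have hmkset : #(Set Θ) = 2 ^ θ := by rw [mk_set, hΘ]
  have hlam_inf : ℵ₀ ≤ lam :=
    le_trans (Ordinal.aleph0_le_cof.2 (Cardinal.isSuccLimit_ord h2inf)) hcf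
  -- the index type of "trace families"
  have hpow : lam ^ θ ≤ 2 ^ θ := by
    calc lam ^ θ ≤ (2 ^ θ) ^ θ := power_le_power_right hlt.le
      _ = 2 ^ (θ * θ) := (power_mul).symm
      _ = 2 ^ θ := by rw [mul_eq_self hθ]
  have hJ : #(Σ i : ι, (Θ → V i)) ≤ 2 ^ θ := by
    rw [mk_sigma]
    have : ∀ i : ι, #(Θ → V i) ≤ lam ^ θ := by
      intro i
      rw [mk_arrow, lift_id, lift_id, hΘ, hV i]
    calc Cardinal.sum (fun i => #(Θ → V i))
        ≤ Cardinal.sum (fun _ : ι => lam ^ θ) := Cardinal.sum_le_sum _ _ this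
      _ = #ι * (lam ^ θ) := sum_const' ι _
      _ ≤ (2 ^ θ) * (2 ^ θ) := mul_le_mul' hι hpow
      _ = 2 ^ θ := mul_eq_self h2inf
  set o := ((2 : Cardinal.{u}) ^ θ).ord with ho
  have hJle : #(Σ i : ι, (Θ → V i)) ≤ #o.ToType := by
    rw [mk_toType, ho, card_ord]; exact hJ
  obtain ⟨h⟩ := hJle
  -- the trace families
  set S : (Σ i : ι, (Θ → V i)) → Set (Set Θ) :=
    fun j => Set.range (fun v : V j.1 => {z : Θ | (G j.1).Adj (j.2 z) v}) with hSdef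
  have hS : ∀ j, #(S j) ≤ lam := fun j => (mk_range_le).trans_eq (hV j.1)
  -- the union of the traces indexed below t
  set U : o.ToType → Set (Set Θ) :=
    fun t => ⋃ j ∈ {j | h j < t}, S j with hUdef
  have hU : ∀ t, #(U t) < 2 ^ θ := by
    intro t
    have h1 : #{j | h j < t} < 2 ^ θ := by
      have : #{j | h j < t} ≤ #(Set.Iio t) := by
        apply mk_le_of_injective (f := fun j : {j | h j < t} => (⟨h j.1, j.2⟩ : Set.Iio t))
        intro a b hab
        exact Subtype.ext (h.injective (by simpa using congrArg Subtype.val hab))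
      exact this.trans_lt (mk_Iio_ord_toType t)
    have h2 : #(U t) ≤ #{j | h j < t} * lam := by
      have hsub : U t ⊆ Set.range (fun p : (Σ j : {j | h j < t}, V j.1.1) =>
          {z : Θ | (G p.1.1.1).Adj (p.1.1.2 z) p.2}) := by
        intro y hy
        obtain ⟨s, ⟨jj, rfl⟩, hys⟩ := hy
        simp only [Set.mem_iUnion] at hys
        obtain ⟨hjj, hy2⟩ := hys
        obtain ⟨v, hv⟩ := hy2
        exact ⟨⟨⟨jj, hjj⟩, v⟩, hv⟩
      refine (mk_le_mk_of_subset hsub).trans ?_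
      refine mk_range_le.trans ?_
      rw [mk_sigma]
      calc Cardinal.sum (fun jj : {j | h j < t} => #(V jj.1.1))
          = Cardinal.sum (fun _ : {j | h j < t} => lam) := by
            congr 1; funext jj; exact hV jj.1.1
        _ = #{j | h j < t} * lam := sum_const' _ _
        _ ≤ #{j | h j < t} * lam := le_rfl
    exact h2.trans_lt (mul_lt_of_lt h2inf h1 hlt)
  have hex : ∀ t, ∃ y : Set Θ, y ∉ U t := by
    intro t
    by_contra hc
    push_neg at hc
    have heq : U t = Set.univ := Set.eq_univ_of_forall hc
    have h3 := hU t
    rw [heq, mk_univ, hmkset] at h3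
    exact lt_irrefl _ h3
  choose xs hxs using hex
  -- a cofinal set of size ≤ lam
  obtain ⟨C, hCunb, hCcard⟩ := Order.exists_cof_eq (α := o.ToType)
  have hCle : #C ≤ lam := by
    rw [hCcard, Ordinal.cof_toType]; exact hcf
  -- a padding set of size lam
  obtain ⟨B, hB⟩ := le_mk_iff_exists_set.1 (show lam ≤ #(Set Θ) by rw [hmkset]; exact hlt.le)
  set A : Set (Set Θ) := xs '' C ∪ B with hAdef
  have hA : #A = lam := by
    apply le_antisymm
    · refine (mk_union_le _ _).trans ?_
      have h1 : #(xs '' C) ≤ lam := mk_image_le.trans hCle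
      calc #(xs '' C) + #B ≤ lam + lam := add_le_add h1 hB.le
        _ = lam := add_eq_self hlam_inf
    · rw [← hB]; exact mk_le_mk_of_subset Set.subset_union_right
  obtain ⟨i, ⟨f⟩⟩ := hcover A hA
  set j : (Σ i : ι, (Θ → V i)) := ⟨i, fun z => f (Sum.inl z)⟩ with hj
  have hAS : A ⊆ S j := by
    intro y hy
    refine ⟨f (Sum.inr ⟨y, hy⟩), ?_⟩
    ext z
    simp only [Set.mem_setOf_eq, hj]
    rw [f.map_adj_iff]
    simp [incidenceGraph]
  haveI : NoMaxOrder o.ToType := Cardinal.noMaxOrder h2inf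
  obtain ⟨a, ha⟩ := exists_gt (h j)
  obtain ⟨t, htC, hta⟩ := hCunb a
  have hjt : h j < t := lt_of_lt_of_le ha hta
  have hxA : xs t ∈ A := Set.mem_union_left _ ⟨t, htC, rfl⟩
  have : xs t ∈ U t := Set.mem_biUnion hjt (hAS hxA)
  exact hxs t this
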